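/- arXiv:2201.05998 — 2 statements merged into one kernel-verified Lean document; each statement's English description precedes it below -/
import Mathlib

section
/- The unique solution (ℓ, m) of the system ℓ(t) = ∫ₜ^∞ λe^{−λs} ds + ∫₀ᵗ λe^{−λs} m(t−s) ds, m(t) = ∫ₜ^∞ λe^{−λs} ds + 2∫₀ᵗ λe^{−λs} m(t−s) ds is given by ℓ(t) = cosh(λt) and m(t) = e^{λt}. -/
open MeasureTheory Real Set Filter intervalIntegral

theorem mean_tree_size_integral_system (lam : ℝ) (hlam : 0 < lam)
    (ℓ m : ℝ → ℝ) (hℓ : ContinuousOn ℓ (Set.Ici 0)) (hm : ContinuousOn m (Set.Ici 0))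
    (h1 : ∀ t : ℝ, 0 ≤ t →
      ℓ t = (∫ s in Set.Ioi t, lam * Real.exp (-lam * s))
            + ∫ s in (0:ℝ)..t, lam * Real.exp (-lam * s) * m (t - s))
    (h2 : ∀ t : ℝ, 0 ≤ t →
      m t = (∫ s in Set.Ioi t, lam * Real.exp (-lam * s))
            + 2 * ∫ s in (0:ℝ)..t, lam * Real.exp (-lam * s) * m (t - s)) :
    ∀ t : ℝ, 0 ≤ t → ℓ t = Real.cosh (lam * t) ∧ m t = Real.exp (lam * t) := by
  -- the tail integral
  have hIoi : ∀ t : ℝ, (∫ s in Set.Ioi t, lam * Real.exp (-lam * s)) = Real.exp (-lam * t) := by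
    intro t
    have hderiv : ∀ x ∈ Set.Ioi t, HasDerivAt (fun s => -Real.exp (-lam * s))
        (lam * Real.exp (-lam * x)) x := by
      intro x _
      have h := (((hasDerivAt_id x).const_mul (-lam)).exp).neg
      simp only [id_eq, mul_one] at h
      refine h.congr_deriv ?_
      ring
    have hint : IntegrableOn (fun s => lam * Real.exp (-lam * s)) (Set.Ioi t) :=
      (exp_neg_integrableOn_Ioi t hlam).const_mul lam
    have htend : Tendsto (fun s => -Real.exp (-lam * s)) atTop (nhds 0) := by
      rw [← neg_zero]
      refine Tendsto.neg ?_
      have h1 : Tendsto (fun s : ℝ => -lam * s) atTop atBot :=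
        (tendsto_id (α := ℝ)).const_mul_atTop_of_neg (by linarith)
      exact Real.tendsto_exp_atBot.comp h1
    have hcont : ContinuousWithinAt (fun s => -Real.exp (-lam * s)) (Set.Ici t) t :=
      ((Real.continuous_exp.comp (continuous_const.mul continuous_id)).neg).continuousWithinAt
    have := integral_Ioi_of_hasDerivAt_of_tendsto hcont hderiv hint htend
    rw [this]; ring
  -- extension of m
  set mh : ℝ → ℝ := fun u => m (max u 0) with hmh
  have hmh_cont : Continuous mh :=
    hm.comp_continuous (continuous_id.max continuous_const) (fun x => le_max_right x 0)
  have hmh_eq : ∀ u : ℝ, 0 ≤ u → mh u = m u := by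
    intro u hu; simp [hmh, max_eq_left hu]
  set g : ℝ → ℝ := fun u => lam * Real.exp (lam * u) * mh u with hg
  have hg_cont : Continuous g :=
    (continuous_const.mul (Real.continuous_exp.comp (continuous_const.mul continuous_id))).mul
      hmh_cont
  set F : ℝ → ℝ := fun t => ∫ u in (0:ℝ)..t, g u with hF
  have hF_deriv : ∀ b : ℝ, HasDerivAt F (g b) b := fun b =>
    (hg_cont.integral_hasStrictDerivAt 0 b).hasDerivAt
  -- convolution rewrite
  have hconv : ∀ t : ℝ, 0 ≤ t →
      (∫ s in (0:ℝ)..t, lam * Real.exp (-lam * s) * m (t - s)) = Real.exp (-lam * t) * F t := by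
    intro t ht
    have step1 : (∫ s in (0:ℝ)..t, lam * Real.exp (-lam * s) * m (t - s))
        = ∫ s in (0:ℝ)..t, Real.exp (-lam * t) * g (t - s) := by
      refine intervalIntegral.integral_congr (fun s hs => ?_)
      rw [Set.uIcc_of_le ht] at hs
      have h1 : 0 ≤ t - s := by linarith [hs.2]
      simp only [hg, ← hmh_eq _ h1]
      rw [show (-lam * s) = -lam * t + lam * (t - s) by ring, Real.exp_add]
      ring
    rw [step1, intervalIntegral.integral_const_mul,
      intervalIntegral.integral_comp_sub_left g t, sub_self, sub_zero]
  -- the integral equation for m in terms of F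
  have hkey : ∀ t : ℝ, 0 ≤ t → m t = Real.exp (-lam * t) + 2 * (Real.exp (-lam * t) * F t) := by
    intro t ht
    rw [h2 t ht, hIoi t, hconv t ht]
  -- G is constant on [0, ∞)
  set G : ℝ → ℝ := fun t => Real.exp (-(2 * lam) * t) * (F t + 1/2) with hG
  have hG_deriv : ∀ x : ℝ, HasDerivAt G
      (Real.exp (-(2*lam) * x) * g x + (Real.exp (-(2*lam) * x) * -(2*lam)) * (F x + 1/2)) x := by
    intro x
    have he := ((hasDerivAt_id x).const_mul (-(2*lam))).exp
    simp only [id_eq, mul_one] at he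
    have hf : HasDerivAt (fun t => F t + 1/2) (g x) x := (hF_deriv x).add_const _
    have := he.mul hf
    refine this.congr_deriv ?_
    ring
  have hG_zero : ∀ x : ℝ, 0 ≤ x → HasDerivAt G 0 x := by
    intro x hx
    have h := hG_deriv x
    have hmul : Real.exp (lam * x) * Real.exp (-lam * x) = 1 := by
      rw [← Real.exp_add, show lam * x + -lam * x = 0 by ring, Real.exp_zero]
    have hgx : g x = lam + 2 * lam * F x := by
      simp only [hg]
      rw [hmh_eq x hx, hkey x hx]
      linear_combination (lam + 2 * lam * F x) * hmul
    rw [hgx] at h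
    convert h using 1
    ring
  have hG_const : ∀ t : ℝ, 0 ≤ t → G t = 1/2 := by
    intro t ht
    have hcont : ContinuousOn G (Set.Icc 0 t) :=
      fun x _ => (hG_deriv x).continuousAt.continuousWithinAt
    have := constant_of_has_deriv_right_zero hcont
      (fun x hx => (hG_zero x hx.1).hasDerivWithinAt) t (Set.mem_Icc.mpr ⟨ht, le_refl t⟩)
    rw [this]
    simp [hG, hF, intervalIntegral.integral_same]
  have hF_eq : ∀ t : ℝ, 0 ≤ t → F t = Real.exp (2 * lam * t) / 2 - 1/2 := by
    intro t ht
    have h := hG_const t ht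
    simp only [hG] at h
    have hmul : Real.exp (-(2 * lam) * t) * Real.exp (2 * lam * t) = 1 := by
      rw [← Real.exp_add, show -(2 * lam) * t + 2 * lam * t = 0 by ring, Real.exp_zero]
    linear_combination Real.exp (2 * lam * t) * h - (F t + 1/2) * hmul
  intro t ht
  have hmul2 : Real.exp (-lam * t) * Real.exp (2 * lam * t) = Real.exp (lam * t) := by
    rw [← Real.exp_add, show -lam * t + 2 * lam * t = lam * t by ring]
  constructor
  · rw [h1 t ht, hIoi t, hconv t ht, hF_eq t ht, Real.cosh_eq]
    rw [show -(lam * t) = -lam * t by ring]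
    linear_combination hmul2 / 2
  · rw [hkey t ht, hF_eq t ht]
    linear_combination hmul2
end

section
/- Let K > 0 and T < 1/(K d). If S_Id and S_f are continuous on [0,T] and satisfy S_Id(t) = K + ∫₀ᵗ S_f(s) ds and S_f(t) = K + d∫₀ᵗ S_f(s)² ds, then S_Id(t) = K − (1/d)·log(1 − K t d) ≤ K + (1/d)·log(1/(1 − K T d)) for all t ∈ [0,T]; in particular S_Id is bounded on [0,T]. -/
open Set intervalIntegral MeasureTheory

theorem expected_functional_bounded (K T : ℝ) (hK : 0 < K) (d : ℕ) (hd : 1 ≤ d)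
    (hT : T < 1 / (K * d))
    (SId Sf : ℝ → ℝ)
    (hSId : ContinuousOn SId (Set.Icc 0 T)) (hSf : ContinuousOn Sf (Set.Icc 0 T))
    (h1 : ∀ t ∈ Set.Icc (0:ℝ) T, SId t = K + ∫ s in (0:ℝ)..t, Sf s)
    (h2 : ∀ t ∈ Set.Icc (0:ℝ) T, Sf t = K + (d : ℝ) * ∫ s in (0:ℝ)..t, (Sf s) ^ 2) :
    ∀ t ∈ Set.Icc (0:ℝ) T,
      SId t = K - (1 / (d : ℝ)) * Real.log (1 - K * t * d) ∧
      SId t ≤ K + (1 / (d : ℝ)) * Real.log (1 / (1 - K * T * d)) := by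
  intro t ht
  have hT0 : (0:ℝ) ≤ T := ht.1.trans ht.2
  have hd0 : (0:ℝ) < d := by exact_mod_cast Nat.lt_of_lt_of_le Nat.zero_lt_one hd
  have hKd : (0:ℝ) < K * d := mul_pos hK hd0
  have hTK : K * (d:ℝ) * T < 1 := by
    have := (lt_div_iff₀ hKd).mp hT
    linarith
  -- positivity of denominator
  have hpos : ∀ s ∈ Set.Icc (0:ℝ) T, 0 < 1 - K * (d:ℝ) * s := by
    intro s hs
    have h1' : K * (d:ℝ) * s ≤ K * (d:ℝ) * T := by
      exact mul_le_mul_of_nonneg_left hs.2 hKd.le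
    linarith
  set g : ℝ → ℝ := fun s => K / (1 - K * (d:ℝ) * s) with hg_def
  -- derivative of g
  have hg_deriv : ∀ s ∈ Set.Icc (0:ℝ) T, HasDerivAt g ((d:ℝ) * (g s) ^ 2) s := by
    intro s hs
    have hne : (1 - K * (d:ℝ) * s) ≠ 0 := (hpos s hs).ne'
    have hu : HasDerivAt (fun x : ℝ => 1 - K * (d:ℝ) * x) (-(K * d)) s := by
      simpa using ((hasDerivAt_id s).const_mul (K * (d:ℝ))).const_sub 1
    have := (hasDerivAt_const s K).div hu hne
    refine this.congr_deriv ?_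
    rw [hg_def]
    field_simp [hg_def]
    ring
  have hg_cont : ContinuousOn g (Set.Icc 0 T) := fun s hs =>
    ((hg_deriv s hs).continuousAt).continuousWithinAt
  -- bound M
  obtain ⟨M₀, hM₀⟩ := isCompact_Icc.exists_bound_of_continuousOn hSf
  set M : ℝ := max M₀ (K / (1 - K * (d:ℝ) * T)) with hM_def
  have hgB : ∀ s ∈ Set.Icc (0:ℝ) T, g s ∈ Set.Icc (-M) M := by
    intro s hs
    have h0 : 0 < g s := div_pos hK (hpos s hs)
    have h1' : g s ≤ K / (1 - K * (d:ℝ) * T) := by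
      apply div_le_div_of_nonneg_left hK.le (hpos T ⟨hT0, le_refl T⟩)
      have : K * (d:ℝ) * s ≤ K * (d:ℝ) * T := mul_le_mul_of_nonneg_left hs.2 hKd.le
      linarith
    constructor
    · have : (0:ℝ) ≤ M := le_trans (le_of_lt (div_pos hK (hpos T ⟨hT0, le_refl T⟩)))
        (le_max_right _ _)
      linarith
    · exact h1'.trans (le_max_right _ _)
  have hSfB : ∀ s ∈ Set.Icc (0:ℝ) T, Sf s ∈ Set.Icc (-M) M := by
    intro s hs
    have := hM₀ s hs
    rw [Real.norm_eq_abs, abs_le] at this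
    exact ⟨le_trans (neg_le_neg (le_max_left _ _)) this.1, this.2.trans (le_max_left _ _)⟩
  have hM0 : 0 ≤ M := by
    rcases hSfB 0 ⟨le_refl 0, hT0⟩ with ⟨hl, hr⟩; linarith
  -- Lipschitz
  have hlip : ∀ s : ℝ, LipschitzOnWith (Real.toNNReal (2 * d * M))
      (fun x : ℝ => (d:ℝ) * x ^ 2) (Set.Icc (-M) M) := by
    intro s
    apply LipschitzOnWith.of_dist_le_mul
    intro x hx y hy
    rw [Real.dist_eq, Real.dist_eq]
    have hxy : |x + y| ≤ 2 * M := by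
      rw [abs_le] at *
      constructor <;> [nlinarith [hx.1, hy.1]; nlinarith [hx.2, hy.2]]
    have : (d:ℝ) * x ^ 2 - (d:ℝ) * y ^ 2 = (d:ℝ) * (x + y) * (x - y) := by ring
    rw [this, abs_mul, abs_mul, abs_of_nonneg hd0.le]
    rw [Real.coe_toNNReal _ (by positivity)]
    calc (d:ℝ) * |x + y| * |x - y| ≤ (d:ℝ) * (2 * M) * |x - y| := by
          apply mul_le_mul_of_nonneg_right _ (abs_nonneg _)
          exact mul_le_mul_of_nonneg_left hxy hd0.le
      _ = 2 * d * M * |x - y| := by ring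
  -- Sf derivative
  have hSf_sq_cont : ContinuousOn (fun s => (Sf s) ^ 2) (Set.Icc 0 T) := hSf.pow 2
  have hSf_deriv : ∀ s ∈ Set.Ico (0:ℝ) T,
      HasDerivWithinAt Sf ((d:ℝ) * (Sf s) ^ 2) (Set.Ici s) s := by
    intro s hs
    have hsT : s ∈ Set.Icc (0:ℝ) T := ⟨hs.1, hs.2.le⟩
    haveI : Fact (s ∈ Set.Icc (0:ℝ) T) := ⟨hsT⟩
    have hint : IntervalIntegrable (fun u => (Sf u) ^ 2) volume 0 s := by
      apply ContinuousOn.intervalIntegrable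
      apply hSf_sq_cont.mono
      rw [Set.uIcc_of_le hs.1]
      exact Set.Icc_subset_Icc le_rfl hs.2.le
    have hmeas : StronglyMeasurableAtFilter (fun u => (Sf u) ^ 2)
        (nhdsWithin s (Set.Icc (0:ℝ) T)) volume :=
      hSf_sq_cont.stronglyMeasurableAtFilter_nhdsWithin measurableSet_Icc s
    have hderivI : HasDerivWithinAt (fun u => ∫ x in (0:ℝ)..u, (Sf x) ^ 2)
        ((Sf s) ^ 2) (Set.Icc (0:ℝ) T) s :=
      intervalIntegral.integral_hasDerivWithinAt_right hint hmeas
        (hSf_sq_cont s hsT)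
    have hSfI : HasDerivWithinAt (fun u => K + (d:ℝ) * ∫ x in (0:ℝ)..u, (Sf x) ^ 2)
        ((d:ℝ) * (Sf s) ^ 2) (Set.Icc (0:ℝ) T) s :=
      (hderivI.const_mul (d:ℝ)).const_add K
    have hcongr : HasDerivWithinAt Sf ((d:ℝ) * (Sf s) ^ 2) (Set.Icc (0:ℝ) T) s :=
      hSfI.congr (fun u hu => (h2 u hu).symm ▸ rfl) ((h2 s hsT))
    apply hcongr.mono_of_mem_nhdsWithin
    have h1' : Set.Ici s ∩ Set.Iio T ∈ nhdsWithin s (Set.Ici s) :=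
      Filter.inter_mem self_mem_nhdsWithin
        (mem_nhdsWithin_of_mem_nhds (Iio_mem_nhds hs.2))
    apply Filter.mem_of_superset h1'
    rintro u ⟨hu1, hu2⟩
    exact ⟨hs.1.trans hu1, hu2.le⟩
  -- g derivative within
  have hg_deriv' : ∀ s ∈ Set.Ico (0:ℝ) T,
      HasDerivWithinAt g ((d:ℝ) * (g s) ^ 2) (Set.Ici s) s := fun s hs =>
    (hg_deriv s ⟨hs.1, hs.2.le⟩).hasDerivWithinAt
  -- initial value
  have hSf0 : Sf 0 = K := by
    have := h2 0 ⟨le_refl 0, hT0⟩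
    simpa using this
  have hg0 : g 0 = K := by simp [hg_def]
  -- uniqueness
  have hEq : Set.EqOn Sf g (Set.Icc 0 T) := by
    apply ODE_solution_unique_of_mem_Icc_right (v := fun _ x => (d:ℝ) * x ^ 2)
      (s := fun _ => Set.Icc (-M) M) (fun s _ => hlip s) hSf hSf_deriv
      (fun s hs => hSfB s ⟨hs.1, hs.2.le⟩) hg_cont hg_deriv'
      (fun s hs => hgB s ⟨hs.1, hs.2.le⟩)
    rw [hSf0, hg0]
  -- compute SId
  have hlog : ∀ u ∈ Set.Icc (0:ℝ) T,
      HasDerivAt (fun x : ℝ => -(1 / (d:ℝ)) * Real.log (1 - K * (d:ℝ) * x)) (g u) u := by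
    intro u hu
    have hne : (1 - K * (d:ℝ) * u) ≠ 0 := (hpos u hu).ne'
    have hu' : HasDerivAt (fun x : ℝ => 1 - K * (d:ℝ) * x) (-(K * d)) u := by
      simpa using ((hasDerivAt_id u).const_mul (K * (d:ℝ))).const_sub 1
    have := (hu'.log hne).const_mul (-(1 / (d:ℝ)))
    refine this.congr_deriv ?_
    rw [hg_def]
    field_simp [hg_def]
  have hint_g : ∀ u ∈ Set.Icc (0:ℝ) T,
      (∫ x in (0:ℝ)..u, g x) = -(1 / (d:ℝ)) * Real.log (1 - K * (d:ℝ) * u) := by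
    intro u hu
    have huI : Set.uIcc (0:ℝ) u ⊆ Set.Icc 0 T := by
      rw [Set.uIcc_of_le hu.1]
      exact Set.Icc_subset_Icc le_rfl hu.2
    have := intervalIntegral.integral_eq_sub_of_hasDerivAt
      (f := fun x : ℝ => -(1 / (d:ℝ)) * Real.log (1 - K * (d:ℝ) * x))
      (f' := g) (a := 0) (b := u)
      (fun x hx => hlog x (huI hx))
      ((hg_cont.mono huI).intervalIntegrable)
    rw [this]
    simp
  have hSId_eq : SId t = K - (1 / (d:ℝ)) * Real.log (1 - K * t * (d:ℝ)) := by
    rw [h1 t ht]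
    have hIeq : (∫ s in (0:ℝ)..t, Sf s) = ∫ s in (0:ℝ)..t, g s := by
      apply intervalIntegral.integral_congr
      intro x hx
      apply hEq
      rw [Set.uIcc_of_le ht.1] at hx
      exact ⟨hx.1, hx.2.trans ht.2⟩
    rw [hIeq, hint_g t ht]
    have : K * (d:ℝ) * t = K * t * (d:ℝ) := by ring
    rw [this]; ring
  refine ⟨hSId_eq, ?_⟩
  rw [hSId_eq]
  have hposT : 0 < 1 - K * T * (d:ℝ) := by
    have := hpos T ⟨hT0, le_refl T⟩; linarith [this]
  have hpost : 0 < 1 - K * t * (d:ℝ) := by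
    have := hpos t ht; linarith [this]
  have hle : 1 - K * T * (d:ℝ) ≤ 1 - K * t * (d:ℝ) := by
    nlinarith [ht.2, hK, hd0]
  have hloglog : Real.log (1 - K * T * (d:ℝ)) ≤ Real.log (1 - K * t * (d:ℝ)) :=
    Real.log_le_log hposT hle
  rw [Real.log_div one_ne_zero hposT.ne', Real.log_one]
  have hdinv : (0:ℝ) ≤ 1 / (d:ℝ) := by positivity
  nlinarith [mul_le_mul_of_nonneg_left hloglog hdinv]
end
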